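/- Let m ≥ 3 be an odd integer, α := 1/(2m) − 1/2, and T > 0. Let g(t,s) be defined for 0 ≤ s < t, of the form g(t,s) = (t−s)^α F(t,s) with F nonnegative and bounded (say 0 ≤ F ≤ K), t ↦ F(t,s) nondecreasing, t ↦ g(t,s) nonincreasing, and g differentiable in t with |∂g/∂t(t,s)| ≤ K·(t−s)^{α−1}. Set G̃(t,u) := 1_{u≤t} g(t,u) and, for ε > 0, ΔG̃_t(u) := G̃(t+ε,u) − G̃(t,u). Then there is a constant C (depending on K, α, T) such that for all sufficiently small ε > 0: ∫_{t=2ε}^T ∫_{s=0}^{t−2ε} ∫_{u=0}^T |ΔG̃_t(u)|·|ΔG̃_s(u)| du ds dt ≤ C·ε^{1 + 1/m}. -/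

import Mathlib

open Set MeasureTheory Filter Topology intervalIntegral

/-- Adapted Volterra kernel: `G̃(t,u) := 1_{u ≤ t} g(t,u)`. -/
noncomputable def adaptedKernel (g : ℝ → ℝ → ℝ) (t u : ℝ) : ℝ :=
  if u ≤ t then g t u else 0


namespace Stmt15Aux

/-- Kernel value bounds. -/
lemma kernel_bounds {a K : ℝ} {g F : ℝ → ℝ → ℝ} (ha : a < 0)
    (hform : ∀ t s : ℝ, 0 ≤ s → s ≤ t → g t s = (t - s) ^ a * F t s)
    (hF_nn : ∀ t s : ℝ, 0 ≤ s → s < t → 0 ≤ F t s)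
    (hF_bd : ∀ t s : ℝ, 0 ≤ s → s < t → F t s ≤ K)
    {u σ : ℝ} (hu : 0 ≤ u) (huσ : u ≤ σ) :
    0 ≤ g σ u ∧ g σ u ≤ K * (σ - u) ^ a := by
  rcases eq_or_lt_of_le huσ with h | h
  · rw [hform σ u hu huσ, ← h, sub_self, Real.zero_rpow (ne_of_lt ha)]
    simp
  · have hpos : (0:ℝ) < σ - u := by linarith
    have hF1 := hF_nn σ u hu h
    have hF2 := hF_bd σ u hu h
    have hr : (0:ℝ) < (σ - u) ^ a := Real.rpow_pos_of_pos hpos a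
    rw [hform σ u hu huσ]
    exact ⟨mul_nonneg hr.le hF1, by nlinarith⟩

/-- Mean value theorem bound on the increment. -/
lemma diff_bounds {a K : ℝ} {g : ℝ → ℝ → ℝ} (ha : a < 0) (hK : 0 ≤ K)
    (hg_anti : ∀ s : ℝ, 0 ≤ s → AntitoneOn (fun t => g t s) (Ioi s))
    (hg_diff : ∀ s t : ℝ, 0 ≤ s → s < t → DifferentiableAt ℝ (fun t' => g t' s) t)
    (hg_deriv : ∀ s t : ℝ, 0 ≤ s → s < t →
      |deriv (fun t' => g t' s) t| ≤ K * (t - s) ^ (a - 1))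
    {u s ε : ℝ} (hu : 0 ≤ u) (hus : u < s) (hε : 0 < ε) :
    0 ≤ g s u - g (s + ε) u ∧ g s u - g (s + ε) u ≤ ε * (K * (s - u) ^ (a - 1)) := by
  have h1 : g (s + ε) u ≤ g s u :=
    hg_anti u hu (mem_Ioi.2 hus) (mem_Ioi.2 (by linarith)) (by linarith)
  refine ⟨by linarith, ?_⟩
  obtain ⟨c, hc, hderiv⟩ := exists_hasDerivAt_eq_slope (fun t' => g t' u)
    (deriv (fun t' => g t' u)) (show s < s + ε by linarith)
    (fun x hx => (hg_diff u x hu (lt_of_lt_of_le hus hx.1)).continuousAt.continuousWithinAt)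
    (fun x hx => (hg_diff u x hu (lt_trans hus hx.1)).hasDerivAt)
  have hcu : u < c := lt_trans hus hc.1
  have hb := hg_deriv u c hu hcu
  have hmono : (c - u) ^ (a - 1) ≤ (s - u) ^ (a - 1) :=
    Real.rpow_le_rpow_of_nonpos (by linarith) (by linarith [hc.1]) (by linarith)
  have habs : |deriv (fun t' => g t' u) c| ≤ K * (s - u) ^ (a - 1) :=
    le_trans hb (by nlinarith)
  have hslope : deriv (fun t' => g t' u) c = (g (s + ε) u - g s u) / ε := by
    simpa using hderiv
  have : g s u - g (s + ε) u = -(deriv (fun t' => g t' u) c) * ε := by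
    rw [hslope]; field_simp; ring
  rw [this]
  have : -(deriv (fun t' => g t' u) c) ≤ K * (s - u) ^ (a - 1) :=
    le_trans (neg_le_abs _) habs
  nlinarith [Real.rpow_nonneg (show (0:ℝ) ≤ s - u by linarith) (a-1), hK]

/-- Piecewise majorant for `|ΔG̃_s(u)|`. -/
noncomputable def Phi (a K ε T s u : ℝ) : ℝ :=
  ε * K * (Ioc (s - T - 1) (s - ε)).indicator (fun v => (s - v) ^ (a - 1)) u
    + K * (Ioo (s - ε) s).indicator (fun v => (s - v) ^ a) u
    + K * (Icc s (s + ε)).indicator (fun v => (s + ε - v) ^ a) u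

lemma Phi_term1_nonneg {a K ε T s : ℝ} (hK : 0 ≤ K) (hε : 0 < ε) (u : ℝ) :
    0 ≤ ε * K * (Ioc (s - T - 1) (s - ε)).indicator (fun v => (s - v) ^ (a - 1)) u :=
  mul_nonneg (mul_nonneg hε.le hK) (Set.indicator_nonneg
    (fun v hv => Real.rpow_nonneg (by have := hv.2; linarith) _) u)

lemma Phi_term2_nonneg {a K ε s : ℝ} (hK : 0 ≤ K) (u : ℝ) :
    0 ≤ K * (Ioo (s - ε) s).indicator (fun v => (s - v) ^ a) u :=
  mul_nonneg hK (Set.indicator_nonneg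
    (fun v hv => Real.rpow_nonneg (by have := hv.2; linarith) _) u)

lemma Phi_term3_nonneg {a K ε s : ℝ} (hK : 0 ≤ K) (u : ℝ) :
    0 ≤ K * (Icc s (s + ε)).indicator (fun v => (s + ε - v) ^ a) u :=
  mul_nonneg hK (Set.indicator_nonneg
    (fun v hv => Real.rpow_nonneg (by have := hv.2; linarith) _) u)

lemma Phi_nonneg {a K ε T s : ℝ} (hK : 0 ≤ K) (hε : 0 < ε) (u : ℝ) :
    0 ≤ Phi a K ε T s u := by
  have h1 := Phi_term1_nonneg (a := a) (T := T) (s := s) hK hε u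
  have h2 := Phi_term2_nonneg (a := a) (ε := ε) (s := s) hK u
  have h3 := Phi_term3_nonneg (a := a) (ε := ε) (s := s) hK u
  unfold Phi; linarith

/-- Pointwise domination of the kernel increment. -/
lemma D_le_Phi {a K : ℝ} {g F : ℝ → ℝ → ℝ} (ha : a < 0) (hK : 0 ≤ K)
    (hform : ∀ t s : ℝ, 0 ≤ s → s ≤ t → g t s = (t - s) ^ a * F t s)
    (hF_nn : ∀ t s : ℝ, 0 ≤ s → s < t → 0 ≤ F t s)
    (hF_bd : ∀ t s : ℝ, 0 ≤ s → s < t → F t s ≤ K)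
    (hg_anti : ∀ s : ℝ, 0 ≤ s → AntitoneOn (fun t => g t s) (Ioi s))
    (hg_diff : ∀ s t : ℝ, 0 ≤ s → s < t → DifferentiableAt ℝ (fun t' => g t' s) t)
    (hg_deriv : ∀ s t : ℝ, 0 ≤ s → s < t →
      |deriv (fun t' => g t' s) t| ≤ K * (t - s) ^ (a - 1))
    {T ε s u : ℝ} (hε : 0 < ε) (hs : 0 ≤ s) (hsT : s ≤ T) (hu : 0 ≤ u) :
    |adaptedKernel g (s + ε) u - adaptedKernel g s u| ≤ Phi a K ε T s u := by
  have h1 := Phi_term1_nonneg (a := a) (T := T) (s := s) hK hε u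
  have h2 := Phi_term2_nonneg (a := a) (ε := ε) (s := s) hK u
  have h3 := Phi_term3_nonneg (a := a) (ε := ε) (s := s) hK u
  rcases le_or_gt u (s - ε) with hc1 | hc1
  · -- u ≤ s - ε : use the derivative bound
    have hus : u < s := by linarith
    have hd := diff_bounds ha hK hg_anti hg_diff hg_deriv hu hus hε
    have hk1 : adaptedKernel g (s + ε) u = g (s + ε) u := if_pos (by linarith)
    have hk2 : adaptedKernel g s u = g s u := if_pos (by linarith)
    have habs : |adaptedKernel g (s + ε) u - adaptedKernel g s u|
        = g s u - g (s + ε) u := by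
      rw [hk1, hk2, abs_sub_comm, abs_of_nonneg hd.1]
    have hmem : u ∈ Ioc (s - T - 1) (s - ε) := ⟨by linarith, hc1⟩
    have : Phi a K ε T s u ≥ ε * K * (s - u) ^ (a - 1) := by
      unfold Phi
      rw [Set.indicator_of_mem hmem]
      linarith
    rw [habs]; calc g s u - g (s + ε) u ≤ ε * (K * (s - u) ^ (a - 1)) := hd.2
      _ = ε * K * (s - u) ^ (a - 1) := by ring
      _ ≤ Phi a K ε T s u := this
  · rcases lt_or_ge u s with hc2 | hc2
    · -- s - ε < u < s : crude bound by the kernel itself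
      have hd := diff_bounds ha hK hg_anti hg_diff hg_deriv hu hc2 hε
      have hkb := kernel_bounds ha hform hF_nn hF_bd hu hc2.le (σ := s)
      have hkb2 := kernel_bounds ha hform hF_nn hF_bd hu
        (show u ≤ s + ε by linarith) (σ := s + ε)
      have hk1 : adaptedKernel g (s + ε) u = g (s + ε) u := if_pos (by linarith)
      have hk2 : adaptedKernel g s u = g s u := if_pos hc2.le
      have habs : |adaptedKernel g (s + ε) u - adaptedKernel g s u|
          = g s u - g (s + ε) u := by
        rw [hk1, hk2, abs_sub_comm, abs_of_nonneg hd.1]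
      have hmem : u ∈ Ioo (s - ε) s := ⟨hc1, hc2⟩
      have : Phi a K ε T s u ≥ K * (s - u) ^ a := by
        unfold Phi
        rw [Set.indicator_of_mem hmem]
        linarith
      rw [habs]
      calc g s u - g (s + ε) u ≤ g s u := by linarith [hkb2.1]
        _ ≤ K * (s - u) ^ a := hkb.2
        _ ≤ Phi a K ε T s u := this
    · rcases le_or_gt u (s + ε) with hc3 | hc3
      · -- s ≤ u ≤ s + ε
        have hkb2 := kernel_bounds ha hform hF_nn hF_bd hu hc3 (σ := s + ε)
        have hk1 : adaptedKernel g (s + ε) u = g (s + ε) u := if_pos hc3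
        have hzero : adaptedKernel g s u = 0 := by
          unfold adaptedKernel
          split_ifs with h
          · have huu : u = s := le_antisymm h hc2
            subst huu
            have := kernel_bounds ha hform hF_nn hF_bd hu le_rfl (σ := u)
            have h0 : (u - u : ℝ) = 0 := sub_self u
            rw [h0, Real.zero_rpow (ne_of_lt ha), mul_zero] at this
            linarith [this.1, this.2]
          · rfl
        have habs : |adaptedKernel g (s + ε) u - adaptedKernel g s u|
            = g (s + ε) u := by rw [hk1, hzero, sub_zero, abs_of_nonneg hkb2.1]
        have hmem : u ∈ Icc s (s + ε) := ⟨hc2, hc3⟩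
        have : Phi a K ε T s u ≥ K * (s + ε - u) ^ a := by
          unfold Phi
          rw [Set.indicator_of_mem hmem]
          linarith
        rw [habs]
        calc g (s + ε) u ≤ K * (s + ε - u) ^ a := hkb2.2
          _ ≤ Phi a K ε T s u := this
      · -- u > s + ε : both kernels vanish
        have hk1 : adaptedKernel g (s + ε) u = 0 := if_neg (by linarith)
        have hk2 : adaptedKernel g s u = 0 := if_neg (by linarith)
        rw [hk1, hk2, sub_zero, abs_zero]
        exact Phi_nonneg hK hε u

lemma integrableOn_piece1 {a s T ε : ℝ} (ha : a < 0) (hε : 0 < ε) (hT : 0 < T)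
    (hεT : ε ≤ T) :
    IntegrableOn (fun v => (s - v) ^ (a - 1)) (Ioc (s - T - 1) (s - ε)) volume := by
  have h0 : (0:ℝ) ∉ Set.uIcc ε (T + 1) := by
    rw [Set.uIcc_of_le (by linarith : ε ≤ T + 1)]
    rintro ⟨h, -⟩; linarith
  have h1 : IntervalIntegrable (fun x : ℝ => x ^ (a - 1)) volume ε (T + 1) :=
    intervalIntegrable_rpow (Or.inr h0)
  have h2 := h1.comp_sub_left s
  have h3 : IntervalIntegrable (fun v => (s - v) ^ (a - 1)) volume (s - T - 1) (s - ε) := by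
    have : s - (T + 1) = s - T - 1 := by ring
    rw [this] at h2
    exact h2.symm
  exact (intervalIntegrable_iff_integrableOn_Ioc_of_le (by linarith)).1 h3

lemma integrableOn_piece2 {a s ε : ℝ} (ha1 : -1 < a) (c : ℝ) :
    IntegrableOn (fun v => (s + c - v) ^ a) (Ioc (s + c - ε) (s + c)) volume := by
  have h1 : IntervalIntegrable (fun x : ℝ => x ^ a) volume 0 ε :=
    intervalIntegrable_rpow' ha1
  have h2 := h1.comp_sub_left (s + c)
  have h3 : IntervalIntegrable (fun v => (s + c - v) ^ a) volume (s + c - ε) (s + c) := by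
    simpa using h2.symm
  rcases le_or_gt (s + c - ε) (s + c) with h | h
  · exact (intervalIntegrable_iff_integrableOn_Ioc_of_le h).1 h3
  · rw [Ioc_eq_empty (by exact fun hlt => absurd hlt (not_lt.2 h.le))]
    exact integrableOn_empty

lemma Phi_integrable {a K ε T s : ℝ} (ha : a < 0) (ha1 : -1 < a) (hε : 0 < ε)
    (hT : 0 < T) (hεT : ε ≤ T) : Integrable (Phi a K ε T s) volume := by
  have i1 : Integrable ((Ioc (s - T - 1) (s - ε)).indicator
      (fun v => (s - v) ^ (a - 1))) volume :=
    (integrableOn_piece1 (s := s) ha hε hT hεT).integrable_indicator measurableSet_Ioc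
  have i2' : IntegrableOn (fun v => (s - v) ^ a) (Ioo (s - ε) s) volume := by
    have := integrableOn_piece2 (s := s) (ε := ε) ha1 0
    simp only [add_zero] at this
    exact this.mono_set Ioo_subset_Ioc_self
  have i2 : Integrable ((Ioo (s - ε) s).indicator (fun v => (s - v) ^ a)) volume :=
    i2'.integrable_indicator measurableSet_Ioo
  have i3' : IntegrableOn (fun v => (s + ε - v) ^ a) (Icc s (s + ε)) volume := by
    have := integrableOn_piece2 (s := s) (ε := ε) ha1 ε
    simp only [add_sub_cancel_right] at this
    exact (integrableOn_Icc_iff_integrableOn_Ioc).2 this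
  have i3 : Integrable ((Icc s (s + ε)).indicator (fun v => (s + ε - v) ^ a)) volume :=
    i3'.integrable_indicator measurableSet_Icc
  exact ((i1.const_mul _).add (i2.const_mul _)).add (i3.const_mul _)

lemma integral_piece1 {a s T ε : ℝ} (ha : a < 0) (hε : 0 < ε) (hT : 0 < T)
    (hεT : ε ≤ T) :
    ∫ v in Ioc (s - T - 1) (s - ε), (s - v) ^ (a - 1) ≤ ε ^ a / (-a) := by
  rw [← intervalIntegral.integral_of_le (by linarith : s - T - 1 ≤ s - ε)]
  have h1 : (∫ x in (s - T - 1)..(s - ε), (s - x) ^ (a - 1))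
      = ∫ x in ε..(T + 1), x ^ (a - 1) := by
    rw [intervalIntegral.integral_comp_sub_left (fun y => y ^ (a - 1)) s]
    congr 1 <;> ring
  rw [h1, integral_rpow (Or.inr ⟨by intro h; linarith [h],
    by rw [Set.uIcc_of_le (by linarith : ε ≤ T + 1)]; rintro ⟨h, -⟩; linarith⟩)]
  have hsimp : a - 1 + 1 = a := by ring
  rw [hsimp]
  have hX : (0:ℝ) ≤ (T + 1) ^ a := Real.rpow_nonneg (by linarith) a
  have hY : (0:ℝ) ≤ ε ^ a := Real.rpow_nonneg hε.le a
  have heq : ((T + 1) ^ a - ε ^ a) / a = (ε ^ a - (T + 1) ^ a) / (-a) := by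
    rw [div_neg, ← neg_div, neg_sub]
  rw [heq]
  exact (div_le_div_iff_of_pos_right (by linarith : (0:ℝ) < -a)).2 (by linarith)

lemma integral_piece2 {a ε : ℝ} (ha1 : -1 < a) (hε : 0 < ε) (s c : ℝ) :
    (∫ v in (s + c - ε)..(s + c), (s + c - v) ^ a) = ε ^ (a + 1) / (a + 1) := by
  rw [intervalIntegral.integral_comp_sub_left (fun y => y ^ a) (s + c)]
  have e1 : s + c - (s + c) = 0 := by ring
  have e2 : s + c - (s + c - ε) = ε := by ring
  rw [e1, e2, integral_rpow (Or.inl ha1), Real.zero_rpow (by linarith : a + 1 ≠ 0)]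
  ring

lemma Phi_integral_le {a K ε T s : ℝ} (ha : a < 0) (ha1 : -1 < a) (hK : 0 ≤ K)
    (hε : 0 < ε) (hT : 0 < T) (hεT : ε ≤ T) :
    ∫ u in Ioc (0:ℝ) T, Phi a K ε T s u
      ≤ K * (1 / (-a) + 2 / (a + 1)) * ε ^ (a + 1) := by
  have ha10 : (0:ℝ) < a + 1 := by linarith
  -- integrability of the three indicator pieces
  have i1 : Integrable ((Ioc (s - T - 1) (s - ε)).indicator
      (fun v => (s - v) ^ (a - 1))) volume :=
    (integrableOn_piece1 (s := s) ha hε hT hεT).integrable_indicator measurableSet_Ioc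
  have i2on : IntegrableOn (fun v => (s - v) ^ a) (Ioc (s - ε) s) volume := by
    have := integrableOn_piece2 (s := s) (ε := ε) ha1 0
    simpa using this
  have i2 : Integrable ((Ioo (s - ε) s).indicator (fun v => (s - v) ^ a)) volume :=
    (i2on.mono_set Ioo_subset_Ioc_self).integrable_indicator measurableSet_Ioo
  have i3on : IntegrableOn (fun v => (s + ε - v) ^ a) (Ioc s (s + ε)) volume := by
    have := integrableOn_piece2 (s := s) (ε := ε) ha1 ε
    simpa using this
  have i3 : Integrable ((Icc s (s + ε)).indicator (fun v => (s + ε - v) ^ a)) volume :=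
    ((integrableOn_Icc_iff_integrableOn_Ioc).2 i3on).integrable_indicator measurableSet_Icc
  -- bound each piece over Ioc 0 T
  have b1 : ∫ u in Ioc (0:ℝ) T,
      (Ioc (s - T - 1) (s - ε)).indicator (fun v => (s - v) ^ (a - 1)) u
      ≤ ε ^ a / (-a) := by
    rw [setIntegral_indicator measurableSet_Ioc]
    have step : ∫ u in Ioc (0:ℝ) T ∩ Ioc (s - T - 1) (s - ε), (s - u) ^ (a - 1)
        ≤ ∫ u in Ioc (s - T - 1) (s - ε), (s - u) ^ (a - 1) := by
      refine setIntegral_mono_set (integrableOn_piece1 (s := s) ha hε hT hεT)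
        ((ae_restrict_iff' measurableSet_Ioc).2 (Filter.Eventually.of_forall ?_)) ?_
      · intro v hv; exact Real.rpow_nonneg (by have := hv.2; linarith) _
      · exact HasSubset.Subset.eventuallyLE Set.inter_subset_right
    exact step.trans (integral_piece1 ha hε hT hεT)
  have b2 : ∫ u in Ioc (0:ℝ) T,
      (Ioo (s - ε) s).indicator (fun v => (s - v) ^ a) u
      ≤ ε ^ (a + 1) / (a + 1) := by
    rw [setIntegral_indicator measurableSet_Ioo]
    have step : ∫ u in Ioc (0:ℝ) T ∩ Ioo (s - ε) s, (s - u) ^ a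
        ≤ ∫ u in Ioc (s - ε) s, (s - u) ^ a := by
      refine setIntegral_mono_set i2on ((ae_restrict_iff' measurableSet_Ioc).2
        (Filter.Eventually.of_forall ?_)) ?_
      · intro v hv; exact Real.rpow_nonneg (by have := hv.2; linarith) _
      · exact HasSubset.Subset.eventuallyLE
          (le_trans Set.inter_subset_right Ioo_subset_Ioc_self)
    refine step.trans ?_
    rw [← intervalIntegral.integral_of_le (by linarith : s - ε ≤ s)]
    have := integral_piece2 (s := s) (c := 0) ha1 hε
    simpa using this.le
  have b3 : ∫ u in Ioc (0:ℝ) T,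
      (Icc s (s + ε)).indicator (fun v => (s + ε - v) ^ a) u
      ≤ ε ^ (a + 1) / (a + 1) := by
    rw [setIntegral_indicator measurableSet_Icc]
    have step : ∫ u in Ioc (0:ℝ) T ∩ Icc s (s + ε), (s + ε - u) ^ a
        ≤ ∫ u in Icc s (s + ε), (s + ε - u) ^ a := by
      refine setIntegral_mono_set ((integrableOn_Icc_iff_integrableOn_Ioc).2 i3on)
        ((ae_restrict_iff' measurableSet_Icc).2 (Filter.Eventually.of_forall ?_)) ?_
      · intro v hv; exact Real.rpow_nonneg (by have := hv.2; linarith) _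
      · exact HasSubset.Subset.eventuallyLE Set.inter_subset_right
    refine step.trans ?_
    rw [integral_Icc_eq_integral_Ioc,
      ← intervalIntegral.integral_of_le (by linarith : s ≤ s + ε)]
    have h := integral_piece2 (s := s) (c := ε) ha1 hε
    rw [show s + ε - ε = s by ring] at h
    exact h.le
  -- combine
  have split : ∫ u in Ioc (0:ℝ) T, Phi a K ε T s u
      = ε * K * (∫ u in Ioc (0:ℝ) T,
          (Ioc (s - T - 1) (s - ε)).indicator (fun v => (s - v) ^ (a - 1)) u)
        + K * (∫ u in Ioc (0:ℝ) T,
          (Ioo (s - ε) s).indicator (fun v => (s - v) ^ a) u)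
        + K * (∫ u in Ioc (0:ℝ) T,
          (Icc s (s + ε)).indicator (fun v => (s + ε - v) ^ a) u) := by
    have j1 : Integrable (fun u => ε * K * (Ioc (s - T - 1) (s - ε)).indicator
        (fun v => (s - v) ^ (a - 1)) u) (volume.restrict (Ioc (0:ℝ) T)) :=
      (i1.const_mul _).restrict
    have j2 : Integrable (fun u => K * (Ioo (s - ε) s).indicator
        (fun v => (s - v) ^ a) u) (volume.restrict (Ioc (0:ℝ) T)) :=
      (i2.const_mul _).restrict
    have j3 : Integrable (fun u => K * (Icc s (s + ε)).indicator
        (fun v => (s + ε - v) ^ a) u) (volume.restrict (Ioc (0:ℝ) T)) :=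
      (i3.const_mul _).restrict
    have j12 : Integrable (fun u => ε * K * (Ioc (s - T - 1) (s - ε)).indicator
        (fun v => (s - v) ^ (a - 1)) u + K * (Ioo (s - ε) s).indicator
        (fun v => (s - v) ^ a) u) (volume.restrict (Ioc (0:ℝ) T)) := by
      exact j1.add j2
    unfold Phi
    rw [integral_add j12 j3, integral_add j1 j2,
      MeasureTheory.integral_const_mul, MeasureTheory.integral_const_mul, MeasureTheory.integral_const_mul]
  rw [split]
  have hεa : ε ^ (a + 1) = ε ^ a * ε := Real.rpow_add_one (ne_of_gt hε) a
  have h1' : ε * K * (∫ u in Ioc (0:ℝ) T,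
      (Ioc (s - T - 1) (s - ε)).indicator (fun v => (s - v) ^ (a - 1)) u)
      ≤ K * (ε ^ (a + 1) / (-a)) := by
    have := mul_le_mul_of_nonneg_left b1 (mul_nonneg hε.le hK)
    refine this.trans_eq ?_
    rw [hεa]; field_simp
  have h2' : K * (∫ u in Ioc (0:ℝ) T,
      (Ioo (s - ε) s).indicator (fun v => (s - v) ^ a) u)
      ≤ K * (ε ^ (a + 1) / (a + 1)) := mul_le_mul_of_nonneg_left b2 hK
  have h3' : K * (∫ u in Ioc (0:ℝ) T,
      (Icc s (s + ε)).indicator (fun v => (s + ε - v) ^ a) u)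
      ≤ K * (ε ^ (a + 1) / (a + 1)) := mul_le_mul_of_nonneg_left b3 hK
  have : K * (ε ^ (a + 1) / (-a)) + K * (ε ^ (a + 1) / (a + 1))
      + K * (ε ^ (a + 1) / (a + 1)) = K * (1 / (-a) + 2 / (a + 1)) * ε ^ (a + 1) := by
    ring
  linarith
lemma rpow_tail_integral_le {a ε b : ℝ} (ha : a < 0) (hε : 0 < ε) (hb : ε ≤ b) :
    (∫ x in ε..b, x ^ (a - 1)) ≤ ε ^ a / (-a) := by
  rw [integral_rpow (Or.inr ⟨by intro h; linarith [h],
    by rw [Set.uIcc_of_le hb]; rintro ⟨h, -⟩; linarith⟩)]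
  have hsimp : a - 1 + 1 = a := by ring
  rw [hsimp]
  have hX : (0:ℝ) ≤ b ^ a := Real.rpow_nonneg (by linarith) a
  have hY : (0:ℝ) ≤ ε ^ a := Real.rpow_nonneg hε.le a
  have heq : (b ^ a - ε ^ a) / a = (ε ^ a - b ^ a) / (-a) := by
    rw [div_neg, ← neg_div, neg_sub]
  rw [heq]
  exact (div_le_div_iff_of_pos_right (by linarith : (0:ℝ) < -a)).2 (by linarith)

/-- The `u`-integral bound. -/
lemma inner_le {a K : ℝ} {g F : ℝ → ℝ → ℝ} (ha : a < 0) (ha1 : -1 < a) (hK : 0 ≤ K)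
    (hform : ∀ t s : ℝ, 0 ≤ s → s ≤ t → g t s = (t - s) ^ a * F t s)
    (hF_nn : ∀ t s : ℝ, 0 ≤ s → s < t → 0 ≤ F t s)
    (hF_bd : ∀ t s : ℝ, 0 ≤ s → s < t → F t s ≤ K)
    (hg_anti : ∀ s : ℝ, 0 ≤ s → AntitoneOn (fun t => g t s) (Ioi s))
    (hg_diff : ∀ s t : ℝ, 0 ≤ s → s < t → DifferentiableAt ℝ (fun t' => g t' s) t)
    (hg_deriv : ∀ s t : ℝ, 0 ≤ s → s < t →
      |deriv (fun t' => g t' s) t| ≤ K * (t - s) ^ (a - 1))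
    {T ε s t : ℝ} (hε : 0 < ε) (hεT : ε ≤ T) (hT : 0 < T) (hs : 0 ≤ s)
    (hst : s ≤ t - 2 * ε) (htT : t ≤ T) :
    (∫ u in (0:ℝ)..T, |adaptedKernel g (t + ε) u - adaptedKernel g t u| *
        |adaptedKernel g (s + ε) u - adaptedKernel g s u|)
      ≤ (ε * K * (t - ε - s) ^ (a - 1)) * (K * (1 / (-a) + 2 / (a + 1)) * ε ^ (a + 1)) := by
  have hts : (0:ℝ) < t - ε - s := by linarith
  have hconst : (0:ℝ) ≤ ε * K * (t - ε - s) ^ (a - 1) :=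
    mul_nonneg (mul_nonneg hε.le hK) (Real.rpow_nonneg hts.le _)
  rw [intervalIntegral.integral_of_le hT.le]
  refine le_trans (integral_mono_of_nonneg
    (g := fun u => (ε * K * (t - ε - s) ^ (a - 1)) * Phi a K ε T s u) ?_ ?_ ?_) ?_
  · exact Filter.Eventually.of_forall fun u => mul_nonneg (abs_nonneg _) (abs_nonneg _)
  · exact ((Phi_integrable (K := K) (s := s) ha ha1 hε hT hεT).const_mul _).restrict
  · refine (ae_restrict_iff' measurableSet_Ioc).2 (Filter.Eventually.of_forall ?_)
    intro u hu
    have hu0 : (0:ℝ) ≤ u := hu.1.le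
    have hsT : s ≤ T := by linarith
    have hPhi := D_le_Phi (T := T) ha hK hform hF_nn hF_bd hg_anti hg_diff hg_deriv
      hε hs hsT hu0
    rcases le_or_gt u (s + ε) with hc | hc
    · -- here `u < t`, use the derivative bound on the `t`-increment
      have hut : u < t := by linarith
      have hd := diff_bounds ha hK hg_anti hg_diff hg_deriv hu0 hut hε
      have hk1 : adaptedKernel g (t + ε) u = g (t + ε) u := if_pos (by linarith)
      have hk2 : adaptedKernel g t u = g t u := if_pos hut.le
      have habs : |adaptedKernel g (t + ε) u - adaptedKernel g t u|
          = g t u - g (t + ε) u := by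
        rw [hk1, hk2, abs_sub_comm, abs_of_nonneg hd.1]
      have hmono : (t - u) ^ (a - 1) ≤ (t - ε - s) ^ (a - 1) :=
        Real.rpow_le_rpow_of_nonpos hts (by linarith) (by linarith)
      have hDt : |adaptedKernel g (t + ε) u - adaptedKernel g t u|
          ≤ ε * K * (t - ε - s) ^ (a - 1) := by
        rw [habs]
        calc g t u - g (t + ε) u ≤ ε * (K * (t - u) ^ (a - 1)) := hd.2
          _ = ε * K * (t - u) ^ (a - 1) := by ring
          _ ≤ ε * K * (t - ε - s) ^ (a - 1) := by
              exact mul_le_mul_of_nonneg_left hmono (mul_nonneg hε.le hK)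
      exact mul_le_mul hDt hPhi (abs_nonneg _) hconst
    · -- here the `s`-increment vanishes
      have hk1 : adaptedKernel g (s + ε) u = 0 := if_neg (not_le.2 hc)
      have hk2 : adaptedKernel g s u = 0 := if_neg (by intro h; exact absurd h (by linarith))
      simp only [hk1, hk2, sub_zero, abs_zero, mul_zero]
      exact mul_nonneg hconst (Phi_nonneg hK hε u)
  · rw [MeasureTheory.integral_const_mul]
    exact mul_le_mul_of_nonneg_left (Phi_integral_le ha ha1 hK hε hT hεT) hconst

/-- The `s`-integral bound. -/
lemma mid_le {a K : ℝ} {g F : ℝ → ℝ → ℝ} (ha : a < 0) (ha1 : -1 < a) (hK : 0 ≤ K)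
    (hform : ∀ t s : ℝ, 0 ≤ s → s ≤ t → g t s = (t - s) ^ a * F t s)
    (hF_nn : ∀ t s : ℝ, 0 ≤ s → s < t → 0 ≤ F t s)
    (hF_bd : ∀ t s : ℝ, 0 ≤ s → s < t → F t s ≤ K)
    (hg_anti : ∀ s : ℝ, 0 ≤ s → AntitoneOn (fun t => g t s) (Ioi s))
    (hg_diff : ∀ s t : ℝ, 0 ≤ s → s < t → DifferentiableAt ℝ (fun t' => g t' s) t)
    (hg_deriv : ∀ s t : ℝ, 0 ≤ s → s < t →
      |deriv (fun t' => g t' s) t| ≤ K * (t - s) ^ (a - 1))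
    {T ε t : ℝ} (hε : 0 < ε) (hεT : ε ≤ T) (hT : 0 < T)
    (ht1 : 2 * ε ≤ t) (htT : t ≤ T) :
    (∫ s in (0:ℝ)..(t - 2 * ε), ∫ u in (0:ℝ)..T,
        |adaptedKernel g (t + ε) u - adaptedKernel g t u| *
        |adaptedKernel g (s + ε) u - adaptedKernel g s u|)
      ≤ (ε * K * (K * (1 / (-a) + 2 / (a + 1)) * ε ^ (a + 1))) * (ε ^ a / (-a)) := by
  have hcα : (0:ℝ) ≤ 1 / (-a) + 2 / (a + 1) :=
    le_of_lt (add_pos (div_pos one_pos (by linarith)) (div_pos two_pos (by linarith)))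
  set c := ε * K * (K * (1 / (-a) + 2 / (a + 1)) * ε ^ (a + 1)) with hcdef
  have hc0 : 0 ≤ c := mul_nonneg (mul_nonneg hε.le hK)
    (mul_nonneg (mul_nonneg hK hcα) (Real.rpow_nonneg hε.le _))
  rw [intervalIntegral.integral_of_le (by linarith : (0:ℝ) ≤ t - 2 * ε)]
  have hcont : ContinuousOn (fun s : ℝ => c * (t - ε - s) ^ (a - 1)) (Icc 0 (t - 2 * ε)) := by
    refine continuousOn_const.mul (ContinuousOn.rpow_const ?_ ?_)
    · exact (continuous_const.sub continuous_id).continuousOn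
    · intro x hx
      left
      have hx2 := hx.2
      exact ne_of_gt (by linarith)
  have hint : IntegrableOn (fun s : ℝ => c * (t - ε - s) ^ (a - 1))
      (Ioc (0:ℝ) (t - 2 * ε)) volume :=
    (hcont.integrableOn_Icc).mono_set Ioc_subset_Icc_self
  refine le_trans (integral_mono_of_nonneg ?_ hint ?_) ?_
  · exact Filter.Eventually.of_forall fun s => intervalIntegral.integral_nonneg hT.le
      (fun u _ => mul_nonneg (abs_nonneg _) (abs_nonneg _))
  · refine (ae_restrict_iff' measurableSet_Ioc).2 (Filter.Eventually.of_forall ?_)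
    intro s hs
    have h := inner_le ha ha1 hK hform hF_nn hF_bd hg_anti hg_diff hg_deriv
      hε hεT hT hs.1.le hs.2 htT
    refine h.trans_eq ?_
    rw [hcdef]; ring
  · rw [← intervalIntegral.integral_of_le (by linarith : (0:ℝ) ≤ t - 2 * ε),
      intervalIntegral.integral_const_mul]
    have hcomp : (∫ s in (0:ℝ)..(t - 2 * ε), (t - ε - s) ^ (a - 1))
        = ∫ x in ε..(t - ε), x ^ (a - 1) := by
      rw [intervalIntegral.integral_comp_sub_left (fun y => y ^ (a - 1)) (t - ε)]
      congr 1 <;> ring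
    rw [hcomp]
    exact mul_le_mul_of_nonneg_left (rpow_tail_integral_le ha hε (by linarith)) hc0

end Stmt15Aux

theorem stmt15 (m : ℕ) (hm3 : 3 ≤ m) (hmodd : Odd m) (T : ℝ) (hT : 0 < T)
    (K : ℝ) (g F : ℝ → ℝ → ℝ)
    (hform : ∀ t s : ℝ, 0 ≤ s → s ≤ t →
      g t s = (t - s) ^ (1 / (2 * (m:ℝ)) - 1/2) * F t s)
    (hF_nn : ∀ t s : ℝ, 0 ≤ s → s < t → 0 ≤ F t s)
    (hF_bd : ∀ t s : ℝ, 0 ≤ s → s < t → F t s ≤ K)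
    (hF_mono : ∀ s : ℝ, 0 ≤ s → MonotoneOn (fun t => F t s) (Ioi s))
    (hg_anti : ∀ s : ℝ, 0 ≤ s → AntitoneOn (fun t => g t s) (Ioi s))
    (hg_diff : ∀ s t : ℝ, 0 ≤ s → s < t →
      DifferentiableAt ℝ (fun t' => g t' s) t)
    (hg_deriv : ∀ s t : ℝ, 0 ≤ s → s < t →
      |deriv (fun t' => g t' s) t| ≤ K * (t - s) ^ (1 / (2 * (m:ℝ)) - 1/2 - 1)) :
    ∃ C : ℝ, ∃ ε₀ > (0:ℝ), ∀ ε ∈ Ioo (0:ℝ) ε₀,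
      (∫ t in (2 * ε)..T, ∫ s in (0:ℝ)..(t - 2 * ε), ∫ u in (0:ℝ)..T,
          |adaptedKernel g (t + ε) u - adaptedKernel g t u|
            * |adaptedKernel g (s + ε) u - adaptedKernel g s u|)
        ≤ C * ε ^ (1 + 1 / (m:ℝ)) := by
  set a : ℝ := 1 / (2 * (m:ℝ)) - 1/2 with ha_def
  have hm0 : (3:ℝ) ≤ (m:ℝ) := by exact_mod_cast hm3
  have hmpos : (0:ℝ) < (m:ℝ) := by linarith
  have hinv : (0:ℝ) < 1 / (2 * (m:ℝ)) := by positivity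
  have hinv6 : 1 / (2 * (m:ℝ)) ≤ 1 / 6 :=
    one_div_le_one_div_of_le (by norm_num) (by linarith)
  have ha : a < 0 := by rw [ha_def]; linarith
  have ha1 : -1 < a := by rw [ha_def]; linarith
  have hK : 0 ≤ K := le_trans (hF_nn 1 0 le_rfl one_pos) (hF_bd 1 0 le_rfl one_pos)
  have hcα : (0:ℝ) ≤ 1 / (-a) + 2 / (a + 1) :=
    le_of_lt (add_pos (div_pos one_pos (by linarith)) (div_pos two_pos (by linarith)))
  refine ⟨T * (K * (K * (1 / (-a) + 2 / (a + 1))) / (-a)), T / 2, by linarith, ?_⟩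
  intro ε hε
  have hε0 : 0 < ε := hε.1
  have hεT2 : ε < T / 2 := hε.2
  have hεT : ε ≤ T := by linarith
  have h2εT : 2 * ε ≤ T := by linarith
  -- the constant appearing in `mid_le`
  set c' : ℝ := (ε * K * (K * (1 / (-a) + 2 / (a + 1)) * ε ^ (a + 1))) * (ε ^ a / (-a))
    with hc'def
  have hc'0 : 0 ≤ c' := by
    refine mul_nonneg (mul_nonneg (mul_nonneg hε0.le hK)
      (mul_nonneg (mul_nonneg hK hcα) (Real.rpow_nonneg hε0.le _))) ?_
    exact div_nonneg (Real.rpow_nonneg hε0.le _) (by linarith)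
  have houter : (∫ t in (2 * ε)..T, ∫ s in (0:ℝ)..(t - 2 * ε), ∫ u in (0:ℝ)..T,
      |adaptedKernel g (t + ε) u - adaptedKernel g t u|
        * |adaptedKernel g (s + ε) u - adaptedKernel g s u|)
      ≤ (T - 2 * ε) * c' := by
    rw [intervalIntegral.integral_of_le h2εT]
    have hconst : IntegrableOn (fun _ : ℝ => c') (Ioc (2 * ε) T) volume :=
      integrableOn_const measure_Ioc_lt_top.ne
    refine le_trans (integral_mono_of_nonneg ?_ hconst ?_) ?_
    · refine (ae_restrict_iff' measurableSet_Ioc).2 (Filter.Eventually.of_forall ?_)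
      intro t ht
      exact intervalIntegral.integral_nonneg (by linarith [ht.1] : (0:ℝ) ≤ t - 2 * ε)
        (fun s _ => intervalIntegral.integral_nonneg hT.le
          (fun u _ => mul_nonneg (abs_nonneg _) (abs_nonneg _)))
    · refine (ae_restrict_iff' measurableSet_Ioc).2 (Filter.Eventually.of_forall ?_)
      intro t ht
      exact Stmt15Aux.mid_le ha ha1 hK hform hF_nn hF_bd hg_anti hg_diff hg_deriv
        hε0 hεT hT ht.1.le ht.2
    · rw [setIntegral_const, Real.volume_real_Ioc, smul_eq_mul]
      rw [max_eq_left (by linarith : (0:ℝ) ≤ T - 2 * ε)]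
  have hm0' : (m:ℝ) ≠ 0 := ne_of_gt hmpos
  have ha0 : (-a) ≠ 0 := by linarith
  have hpow : ε * ε ^ (a + 1) * ε ^ a = ε ^ (1 + 1 / (m:ℝ)) := by
    have h1 : ε ^ (a + 1) * ε ^ a = ε ^ (a + 1 + a) := (Real.rpow_add hε0 _ _).symm
    have h3 : a + 1 + a + 1 = 1 + 1 / (m:ℝ) := by
      rw [ha_def]; field_simp; ring
    rw [mul_assoc, h1, mul_comm ε _, ← Real.rpow_add_one (ne_of_gt hε0), h3]
  have hfin : T * c' = T * (K * (K * (1 / (-a) + 2 / (a + 1))) / (-a))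
      * ε ^ (1 + 1 / (m:ℝ)) := by
    rw [hc'def, ← hpow]
    field_simp
  calc (∫ t in (2 * ε)..T, ∫ s in (0:ℝ)..(t - 2 * ε), ∫ u in (0:ℝ)..T,
      |adaptedKernel g (t + ε) u - adaptedKernel g t u|
        * |adaptedKernel g (s + ε) u - adaptedKernel g s u|)
      ≤ (T - 2 * ε) * c' := houter
    _ ≤ T * c' := mul_le_mul_of_nonneg_right (by linarith) hc'0
    _ = T * (K * (K * (1 / (-a) + 2 / (a + 1))) / (-a)) * ε ^ (1 + 1 / (m:ℝ)) := hfin
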